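/- Let g : ℝ → ℝ be a bounded continuous function. Then u(x,y) = (1/π) ∫_ℝ y·g(s)/((x−s)² + y²) ds defines a harmonic function on the upper half-plane with lim_{(x,y)→(x₀,0⁺)} u(x,y) = g(x₀) for each x₀ ∈ ℝ. -/

import Mathlib

open Real MeasureTheory Filter Metric

lemma pk_integrable_inv (x y : ℝ) (hy : 0 < y) :
    Integrable fun s : ℝ => ((x - s) ^ 2 + y ^ 2)⁻¹ := by
  have h1 : Integrable fun t : ℝ => (1 + (t / y) ^ 2)⁻¹ :=
    integrable_inv_one_add_sq.comp_div hy.ne'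
  have h2 : Integrable fun s : ℝ => (1 + ((s - x) / y) ^ 2)⁻¹ := h1.comp_sub_right x
  refine (h2.const_mul ((y ^ 2)⁻¹)).congr (Eventually.of_forall fun s => ?_)
  have hD : (0:ℝ) < (x - s) ^ 2 + y ^ 2 := by positivity
  field_simp
  ring

lemma pk_hasDerivAt_P (c y s : ℝ) (hy : 0 < y) (t : ℝ) :
    HasDerivAt (fun t : ℝ => y * c / ((t - s) ^ 2 + y ^ 2))
      (-2 * y * c * (t - s) / ((t - s) ^ 2 + y ^ 2) ^ 2) t := by
  have hD : (0:ℝ) < (t - s) ^ 2 + y ^ 2 := by positivity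
  have hb : HasDerivAt (fun t : ℝ => (t - s) ^ 2 + y ^ 2) (2 * (t - s)) t := by
    simpa using (((hasDerivAt_id t).sub_const s).pow 2).add_const (y ^ 2)
  have h := (hasDerivAt_const t (y * c)).fun_div hb hD.ne'
  refine h.congr_deriv ?_
  field_simp
  ring

lemma pk_hasDerivAt_P' (c y s : ℝ) (hy : 0 < y) (t : ℝ) :
    HasDerivAt (fun t : ℝ => -2 * y * c * (t - s) / ((t - s) ^ 2 + y ^ 2) ^ 2)
      (2 * y * c * (3 * (t - s) ^ 2 - y ^ 2) / ((t - s) ^ 2 + y ^ 2) ^ 3) t := by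
  have hD : (0:ℝ) < (t - s) ^ 2 + y ^ 2 := by positivity
  have hb0 : HasDerivAt (fun t : ℝ => (t - s) ^ 2 + y ^ 2) (2 * (t - s)) t := by
    simpa using (((hasDerivAt_id t).sub_const s).pow 2).add_const (y ^ 2)
  have hb : HasDerivAt (fun t : ℝ => ((t - s) ^ 2 + y ^ 2) ^ 2)
      (2 * ((t - s) ^ 2 + y ^ 2) * (2 * (t - s))) t := by
    simpa [mul_comm, mul_assoc] using hb0.fun_pow 2
  have ha : HasDerivAt (fun t : ℝ => -2 * y * c * (t - s)) (-2 * y * c) t := by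
    simpa using ((hasDerivAt_id t).sub_const s).const_mul (-2 * y * c)
  have h := ha.fun_div hb (pow_ne_zero 2 hD.ne')
  refine h.congr_deriv ?_
  field_simp
  ring

lemma pk_hasDerivAt_Q (c a s : ℝ) (t : ℝ) (ht : 0 < t) :
    HasDerivAt (fun t : ℝ => t * c / ((a - s) ^ 2 + t ^ 2))
      (c * ((a - s) ^ 2 - t ^ 2) / ((a - s) ^ 2 + t ^ 2) ^ 2) t := by
  have hD : (0:ℝ) < (a - s) ^ 2 + t ^ 2 := by positivity
  have hb : HasDerivAt (fun t : ℝ => (a - s) ^ 2 + t ^ 2) (2 * t) t := by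
    simpa using ((hasDerivAt_id t).pow 2).const_add ((a - s) ^ 2)
  have ha : HasDerivAt (fun t : ℝ => t * c) c t := by
    simpa using (hasDerivAt_id t).mul_const c
  have h := ha.fun_div hb hD.ne'
  refine h.congr_deriv ?_
  field_simp
  ring

lemma pk_hasDerivAt_Q' (c a s : ℝ) (t : ℝ) (ht : 0 < t) :
    HasDerivAt (fun t : ℝ => c * ((a - s) ^ 2 - t ^ 2) / ((a - s) ^ 2 + t ^ 2) ^ 2)
      (2 * t * c * (t ^ 2 - 3 * (a - s) ^ 2) / ((a - s) ^ 2 + t ^ 2) ^ 3) t := by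
  have hD : (0:ℝ) < (a - s) ^ 2 + t ^ 2 := by positivity
  have hb0 : HasDerivAt (fun t : ℝ => (a - s) ^ 2 + t ^ 2) (2 * t) t := by
    simpa using ((hasDerivAt_id t).pow 2).const_add ((a - s) ^ 2)
  have hb : HasDerivAt (fun t : ℝ => ((a - s) ^ 2 + t ^ 2) ^ 2)
      (2 * ((a - s) ^ 2 + t ^ 2) * (2 * t)) t := by
    simpa [mul_comm, mul_assoc] using hb0.fun_pow 2
  have ha : HasDerivAt (fun t : ℝ => c * ((a - s) ^ 2 - t ^ 2)) (c * (-2 * t)) t := by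
    have : HasDerivAt (fun t : ℝ => (a - s) ^ 2 - t ^ 2) (-(2 * t)) t := by
      simpa using ((hasDerivAt_id t).pow 2).const_sub ((a - s) ^ 2)
    simpa [mul_comm, mul_assoc] using this.const_mul c
  have h := ha.fun_div hb (pow_ne_zero 2 hD.ne')
  refine h.congr_deriv ?_
  field_simp
  ring
lemma pk_integrable_div (x y c : ℝ) (hy : 0 < y) :
    Integrable fun s : ℝ => c / ((x - s) ^ 2 + y ^ 2) :=
  ((pk_integrable_inv x y hy).const_mul c).congr
    (Eventually.of_forall fun s => (div_eq_mul_inv _ _).symm)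

lemma pk_cont_den (x y : ℝ) : Continuous fun s : ℝ => (x - s) ^ 2 + y ^ 2 :=
  (((continuous_const.sub continuous_id).pow 2).add continuous_const)

section
variable (g : ℝ → ℝ) (hg : Continuous g) (M : ℝ) (hM : ∀ t : ℝ, |g t| ≤ M)

include hg hM in
lemma pk_deriv1_x (y : ℝ) (hy : 0 < y) (t : ℝ) :
    Integrable (fun s : ℝ => -2 * y * g s * (t - s) / ((t - s) ^ 2 + y ^ 2) ^ 2) ∧
    HasDerivAt (fun t : ℝ => ∫ s : ℝ, y * g s / ((t - s) ^ 2 + y ^ 2))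
      (∫ s : ℝ, -2 * y * g s * (t - s) / ((t - s) ^ 2 + y ^ 2) ^ 2) t := by
  have hM0 : 0 ≤ M := (abs_nonneg _).trans (hM 0)
  have key := hasDerivAt_integral_of_dominated_loc_of_deriv_le (μ := volume)
    (F := fun (t : ℝ) (s : ℝ) => y * g s / ((t - s) ^ 2 + y ^ 2))
    (F' := fun (t : ℝ) (s : ℝ) => -2 * y * g s * (t - s) / ((t - s) ^ 2 + y ^ 2) ^ 2)
    (x₀ := t) (bound := fun s => 4 * M / ((t - s) ^ 2 + y ^ 2)) (ball_mem_nhds t hy)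
    ?_ ?_ ?_ ?_ ?_ ?_
  · exact ⟨key.1, key.2⟩
  · refine Eventually.of_forall fun x => Continuous.aestronglyMeasurable ?_
    exact (continuous_const.mul hg).div (pk_cont_den x y) fun s => by positivity
  · refine Integrable.mono' (pk_integrable_div t y (y * M) hy)
      ((continuous_const.mul hg).div (pk_cont_den t y) fun s => by positivity).aestronglyMeasurable
      (Eventually.of_forall fun s => ?_)
    have hD : (0:ℝ) < (t - s) ^ 2 + y ^ 2 := by positivity
    rw [Real.norm_eq_abs, abs_div, abs_of_pos hD, abs_mul, abs_of_pos hy]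
    gcongr
    exact hM s
  · refine Continuous.aestronglyMeasurable ?_
    exact ((continuous_const.mul hg).mul (continuous_const.sub continuous_id)).div
      ((pk_cont_den t y).pow 2) fun s => by positivity
  · refine Eventually.of_forall fun s x hx => ?_
    have hD : (0:ℝ) < (x - s) ^ 2 + y ^ 2 := by positivity
    have hDt : (0:ℝ) < (t - s) ^ 2 + y ^ 2 := by positivity
    have hxt : |x - t| ≤ y := le_of_lt (by simpa [Real.dist_eq] using hx)
    have hxt' := abs_le.mp hxt
    have h1 : 2 * y * |x - s| ≤ (x - s) ^ 2 + y ^ 2 := by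
      nlinarith [sq_nonneg (|x - s| - y), sq_abs (x - s), abs_nonneg (x - s)]
    have hxy2 : (x - t) ^ 2 ≤ y ^ 2 := by nlinarith [hxt'.1, hxt'.2]
    have h2 : (t - s) ^ 2 + y ^ 2 ≤ 4 * ((x - s) ^ 2 + y ^ 2) := by
      nlinarith [sq_nonneg ((x - s) + (x - t)), hxy2]
    have habs : |(-2 * y * g s * (x - s))| = 2 * y * |g s| * |x - s| := by
      rw [abs_mul, abs_mul, abs_mul]
      norm_num [abs_of_pos hy]
    rw [Real.norm_eq_abs, abs_div, abs_of_pos (pow_pos hD 2), habs,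
      div_le_div_iff₀ (pow_pos hD 2) hDt]
    calc 2 * y * |g s| * |x - s| * ((t - s) ^ 2 + y ^ 2)
        = |g s| * ((2 * y * |x - s|) * ((t - s) ^ 2 + y ^ 2)) := by ring
      _ ≤ M * (((x - s) ^ 2 + y ^ 2) * (4 * ((x - s) ^ 2 + y ^ 2))) := by
          refine mul_le_mul (hM s) (mul_le_mul h1 h2 (by positivity) hD.le) (by positivity) hM0
      _ = 4 * M * ((x - s) ^ 2 + y ^ 2) ^ 2 := by ring
  · exact pk_integrable_div t y (4 * M) hy
  · exact Eventually.of_forall fun s x _ => pk_hasDerivAt_P (g s) y s hy x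


include hg hM in
lemma pk_deriv2_x (y : ℝ) (hy : 0 < y) (t : ℝ) :
    Integrable (fun s : ℝ => 2 * y * g s * (3 * (t - s) ^ 2 - y ^ 2) / ((t - s) ^ 2 + y ^ 2) ^ 3) ∧
    HasDerivAt (fun t : ℝ => ∫ s : ℝ, -2 * y * g s * (t - s) / ((t - s) ^ 2 + y ^ 2) ^ 2)
      (∫ s : ℝ, 2 * y * g s * (3 * (t - s) ^ 2 - y ^ 2) / ((t - s) ^ 2 + y ^ 2) ^ 3) t := by
  have hM0 : 0 ≤ M := (abs_nonneg _).trans (hM 0)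
  have key := hasDerivAt_integral_of_dominated_loc_of_deriv_le (μ := volume)
    (F := fun (t : ℝ) (s : ℝ) => -2 * y * g s * (t - s) / ((t - s) ^ 2 + y ^ 2) ^ 2)
    (F' := fun (t : ℝ) (s : ℝ) => 2 * y * g s * (3 * (t - s) ^ 2 - y ^ 2) / ((t - s) ^ 2 + y ^ 2) ^ 3)
    (x₀ := t) (bound := fun s => 96 * M / (y * ((t - s) ^ 2 + y ^ 2)) ) (ball_mem_nhds t hy)
    ?_ ?_ ?_ ?_ ?_ ?_
  · exact ⟨key.1, key.2⟩
  · refine Eventually.of_forall fun x => Continuous.aestronglyMeasurable ?_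
    exact ((continuous_const.mul hg).mul (continuous_const.sub continuous_id)).div
      ((pk_cont_den x y).pow 2) fun s => by positivity
  · exact (pk_deriv1_x g hg M hM y hy t).1
  · refine Continuous.aestronglyMeasurable ?_
    exact ((continuous_const.mul hg).mul
      ((continuous_const.mul ((continuous_const.sub continuous_id).pow 2)).sub continuous_const)).div
      ((pk_cont_den t y).pow 3) fun s => by positivity
  · refine Eventually.of_forall fun s x hx => ?_
    have hD : (0:ℝ) < (x - s) ^ 2 + y ^ 2 := by positivity
    have hDt : (0:ℝ) < (t - s) ^ 2 + y ^ 2 := by positivity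
    have hxt : |x - t| ≤ y := le_of_lt (by simpa [Real.dist_eq] using hx)
    have hxt' := abs_le.mp hxt
    have hxy2 : (x - t) ^ 2 ≤ y ^ 2 := by nlinarith [hxt'.1, hxt'.2]
    have h2 : (t - s) ^ 2 + y ^ 2 ≤ 4 * ((x - s) ^ 2 + y ^ 2) := by
      nlinarith [sq_nonneg ((x - s) + (x - t)), hxy2]
    have h3 : |3 * (x - s) ^ 2 - y ^ 2| ≤ 3 * ((x - s) ^ 2 + y ^ 2) := by
      rw [abs_le]
      constructor <;> nlinarith [sq_nonneg (x - s), sq_nonneg y]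
    have h4 : y ^ 2 ≤ (x - s) ^ 2 + y ^ 2 := by nlinarith [sq_nonneg (x - s)]
    have habs : |(2 * y * g s * (3 * (x - s) ^ 2 - y ^ 2))|
        = 2 * y * |g s| * |3 * (x - s) ^ 2 - y ^ 2| := by
      rw [abs_mul, abs_mul, abs_mul]
      norm_num [abs_of_pos hy]
    rw [Real.norm_eq_abs, abs_div, abs_of_pos (pow_pos hD 3), habs,
      div_le_div_iff₀ (pow_pos hD 3) (by positivity)]
    calc 2 * y * |g s| * |3 * (x - s) ^ 2 - y ^ 2| * (y * ((t - s) ^ 2 + y ^ 2))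
        = 2 * (y ^ 2) * ((|g s| * |3 * (x - s) ^ 2 - y ^ 2|) * ((t - s) ^ 2 + y ^ 2)) := by ring
      _ ≤ 2 * ((x - s) ^ 2 + y ^ 2) *
          ((M * (3 * ((x - s) ^ 2 + y ^ 2))) * (4 * ((x - s) ^ 2 + y ^ 2))) := by
          refine mul_le_mul (by nlinarith [h4]) ?_ (by positivity) (by positivity)
          exact mul_le_mul (mul_le_mul (hM s) h3 (abs_nonneg _) hM0) h2 hDt.le
            (by positivity)
      _ = 24 * M * ((x - s) ^ 2 + y ^ 2) ^ 3 := by ring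
      _ ≤ 96 * M * ((x - s) ^ 2 + y ^ 2) ^ 3 := by nlinarith [pow_pos hD 3, hM0]
  · have := (pk_integrable_inv t y hy).const_mul (96 * M / y)
    refine this.congr (Eventually.of_forall fun s => ?_)
    have hD : (0:ℝ) < (t - s) ^ 2 + y ^ 2 := by positivity
    field_simp
  · exact Eventually.of_forall fun s x _ => pk_hasDerivAt_P' (g s) y s hy x

include hg hM in
lemma pk_deriv1_y (a : ℝ) (y : ℝ) (hy : 0 < y) :
    Integrable (fun s : ℝ => g s * ((a - s) ^ 2 - y ^ 2) / ((a - s) ^ 2 + y ^ 2) ^ 2) ∧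
    HasDerivAt (fun t : ℝ => ∫ s : ℝ, t * g s / ((a - s) ^ 2 + t ^ 2))
      (∫ s : ℝ, g s * ((a - s) ^ 2 - y ^ 2) / ((a - s) ^ 2 + y ^ 2) ^ 2) y := by
  have hM0 : 0 ≤ M := (abs_nonneg _).trans (hM 0)
  have key := hasDerivAt_integral_of_dominated_loc_of_deriv_le (μ := volume)
    (F := fun (t : ℝ) (s : ℝ) => t * g s / ((a - s) ^ 2 + t ^ 2))
    (F' := fun (t : ℝ) (s : ℝ) => g s * ((a - s) ^ 2 - t ^ 2) / ((a - s) ^ 2 + t ^ 2) ^ 2)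
    (x₀ := y) (bound := fun s => 4 * M / ((a - s) ^ 2 + y ^ 2)) (ball_mem_nhds y (half_pos hy))
    ?_ ?_ ?_ ?_ ?_ ?_
  · exact ⟨key.1, key.2⟩
  · filter_upwards [eventually_gt_nhds hy] with x hx
    refine Continuous.aestronglyMeasurable ?_
    exact (continuous_const.mul hg).div (pk_cont_den a x) fun s => by positivity
  · refine Integrable.mono' (pk_integrable_div a y (y * M) hy)
      ((continuous_const.mul hg).div (pk_cont_den a y) fun s => by positivity).aestronglyMeasurable
      (Eventually.of_forall fun s => ?_)
    have hD : (0:ℝ) < (a - s) ^ 2 + y ^ 2 := by positivity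
    rw [Real.norm_eq_abs, abs_div, abs_of_pos hD, abs_mul, abs_of_pos hy]
    gcongr
    exact hM s
  · refine Continuous.aestronglyMeasurable ?_
    exact (hg.mul ((((continuous_const.sub continuous_id).pow 2)).sub continuous_const)).div
      ((pk_cont_den a y).pow 2) fun s => by positivity
  · refine Eventually.of_forall fun s x hx => ?_
    have hx' : |x - y| ≤ y / 2 := le_of_lt (by simpa [Real.dist_eq] using hx)
    have hx'' := abs_le.mp hx'
    have hxpos : y / 2 ≤ x := by linarith [hx''.1]
    have hx0 : 0 < x := by linarith
    have hD : (0:ℝ) < (a - s) ^ 2 + x ^ 2 := by positivity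
    have hD0 : (0:ℝ) < (a - s) ^ 2 + y ^ 2 := by positivity
    have h2 : (a - s) ^ 2 + y ^ 2 ≤ 4 * ((a - s) ^ 2 + x ^ 2) := by
      nlinarith [sq_nonneg (a - s)]
    have h3 : |(a - s) ^ 2 - x ^ 2| ≤ (a - s) ^ 2 + x ^ 2 := by
      rw [abs_le]
      constructor <;> nlinarith [sq_nonneg (a - s), sq_nonneg x]
    rw [Real.norm_eq_abs, abs_div, abs_of_pos (pow_pos hD 2), abs_mul,
      div_le_div_iff₀ (pow_pos hD 2) hD0]
    calc |g s| * |(a - s) ^ 2 - x ^ 2| * ((a - s) ^ 2 + y ^ 2)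
        ≤ M * ((a - s) ^ 2 + x ^ 2) * (4 * ((a - s) ^ 2 + x ^ 2)) := by
          exact mul_le_mul (mul_le_mul (hM s) h3 (abs_nonneg _) hM0) h2 hD0.le (by positivity)
      _ = 4 * M * ((a - s) ^ 2 + x ^ 2) ^ 2 := by ring
  · exact pk_integrable_div a y (4 * M) hy
  · refine Eventually.of_forall fun s x hx => ?_
    have hx' : |x - y| ≤ y / 2 := le_of_lt (by simpa [Real.dist_eq] using hx)
    have hxpos : 0 < x := by
      have := (abs_le.mp hx').1; linarith
    exact pk_hasDerivAt_Q (g s) a s x hxpos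

include hg hM in
lemma pk_deriv2_y (a : ℝ) (y : ℝ) (hy : 0 < y) :
    Integrable (fun s : ℝ => 2 * y * g s * (y ^ 2 - 3 * (a - s) ^ 2) / ((a - s) ^ 2 + y ^ 2) ^ 3) ∧
    HasDerivAt (fun t : ℝ => ∫ s : ℝ, g s * ((a - s) ^ 2 - t ^ 2) / ((a - s) ^ 2 + t ^ 2) ^ 2)
      (∫ s : ℝ, 2 * y * g s * (y ^ 2 - 3 * (a - s) ^ 2) / ((a - s) ^ 2 + y ^ 2) ^ 3) y := by
  have hM0 : 0 ≤ M := (abs_nonneg _).trans (hM 0)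
  have key := hasDerivAt_integral_of_dominated_loc_of_deriv_le (μ := volume)
    (F := fun (t : ℝ) (s : ℝ) => g s * ((a - s) ^ 2 - t ^ 2) / ((a - s) ^ 2 + t ^ 2) ^ 2)
    (F' := fun (t : ℝ) (s : ℝ) => 2 * t * g s * (t ^ 2 - 3 * (a - s) ^ 2) / ((a - s) ^ 2 + t ^ 2) ^ 3)
    (x₀ := y) (bound := fun s => 144 * M / (y * ((a - s) ^ 2 + y ^ 2))) (ball_mem_nhds y (half_pos hy))
    ?_ ?_ ?_ ?_ ?_ ?_
  · exact ⟨key.1, key.2⟩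
  · filter_upwards [eventually_gt_nhds hy] with x hx
    refine Continuous.aestronglyMeasurable ?_
    exact (hg.mul ((((continuous_const.sub continuous_id).pow 2)).sub continuous_const)).div
      ((pk_cont_den a x).pow 2) fun s => by positivity
  · exact (pk_deriv1_y g hg M hM a y hy).1
  · refine Continuous.aestronglyMeasurable ?_
    exact ((continuous_const.mul hg).mul
      (continuous_const.sub (continuous_const.mul ((continuous_const.sub continuous_id).pow 2)))).div
      ((pk_cont_den a y).pow 3) fun s => by positivity
  · refine Eventually.of_forall fun s x hx => ?_
    have hx' : |x - y| ≤ y / 2 := le_of_lt (by simpa [Real.dist_eq] using hx)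
    have hx'' := abs_le.mp hx'
    have hxpos : y / 2 ≤ x := by linarith [hx''.1]
    have hxup : x ≤ 3 * y / 2 := by linarith [hx''.2]
    have hx0 : 0 < x := by linarith
    have hD : (0:ℝ) < (a - s) ^ 2 + x ^ 2 := by positivity
    have hD0 : (0:ℝ) < (a - s) ^ 2 + y ^ 2 := by positivity
    have h2 : (a - s) ^ 2 + y ^ 2 ≤ 4 * ((a - s) ^ 2 + x ^ 2) := by
      nlinarith [sq_nonneg (a - s)]
    have h3 : |x ^ 2 - 3 * (a - s) ^ 2| ≤ 3 * ((a - s) ^ 2 + x ^ 2) := by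
      rw [abs_le]
      constructor <;> nlinarith [sq_nonneg (a - s), sq_nonneg x]
    have h5 : 2 * x * y ≤ 12 * ((a - s) ^ 2 + x ^ 2) := by
      nlinarith [sq_nonneg (a - s)]
    have habs : |(2 * x * g s * (x ^ 2 - 3 * (a - s) ^ 2))|
        = 2 * x * |g s| * |x ^ 2 - 3 * (a - s) ^ 2| := by
      rw [abs_mul, abs_mul, abs_mul]
      norm_num [abs_of_nonneg (by linarith [hxpos, hy] : (0:ℝ) ≤ x)]
    rw [Real.norm_eq_abs, abs_div, abs_of_pos (pow_pos hD 3), habs,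
      div_le_div_iff₀ (pow_pos hD 3) (by positivity)]
    calc 2 * x * |g s| * |x ^ 2 - 3 * (a - s) ^ 2| * (y * ((a - s) ^ 2 + y ^ 2))
        = (2 * x * y) * ((|g s| * |x ^ 2 - 3 * (a - s) ^ 2|) * ((a - s) ^ 2 + y ^ 2)) := by ring
      _ ≤ (12 * ((a - s) ^ 2 + x ^ 2)) *
          ((M * (3 * ((a - s) ^ 2 + x ^ 2))) * (4 * ((a - s) ^ 2 + x ^ 2))) := by
          refine mul_le_mul h5 ?_ (by positivity) (by positivity)
          exact mul_le_mul (mul_le_mul (hM s) h3 (abs_nonneg _) hM0) h2 hD0.le (by positivity)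
      _ = 144 * M * ((a - s) ^ 2 + x ^ 2) ^ 3 := by ring
  · have := (pk_integrable_inv a y hy).const_mul (144 * M / y)
    refine this.congr (Eventually.of_forall fun s => ?_)
    have hD : (0:ℝ) < (a - s) ^ 2 + y ^ 2 := by positivity
    field_simp
  · refine Eventually.of_forall fun s x hx => ?_
    have hx' : |x - y| ≤ y / 2 := le_of_lt (by simpa [Real.dist_eq] using hx)
    have hxpos : 0 < x := by
      have := (abs_le.mp hx').1; linarith
    exact pk_hasDerivAt_Q' (g s) a s x hxpos
end

lemma pk_cov (g : ℝ → ℝ) (x y : ℝ) (hy : 0 < y) :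
    (∫ s : ℝ, y * g s / ((x - s) ^ 2 + y ^ 2)) = ∫ t : ℝ, g (x + y * t) / (1 + t ^ 2) := by
  set F : ℝ → ℝ := fun s => y * g s / ((x - s) ^ 2 + y ^ 2) with hF
  have h0 : (∫ s, F s) = ∫ u, F (u + x) := (integral_add_right_eq_self F x).symm
  have h1 : (∫ t : ℝ, F (y * t + x)) = |y⁻¹| • ∫ u, F (u + x) :=
    MeasureTheory.Measure.integral_comp_mul_left (fun u => F (u + x)) y
  have h2 : (∫ s, F s) = y * ∫ t : ℝ, F (y * t + x) := by
    rw [h1, abs_of_pos (inv_pos.mpr hy), smul_eq_mul, ← h0]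
    field_simp
  rw [h2, ← integral_const_mul]
  congr 1
  funext t
  have h3 : (0:ℝ) < 1 + t ^ 2 := by positivity
  simp only [hF]
  rw [show (x - (y * t + x)) ^ 2 + y ^ 2 = y ^ 2 * (1 + t ^ 2) by ring]
  field_simp
  ring

lemma pk_boundary (g : ℝ → ℝ) (hg : Continuous g) (M : ℝ) (hM : ∀ t : ℝ, |g t| ≤ M) (x₀ : ℝ) :
    Tendsto (fun p : ℝ × ℝ => (1 / Real.pi) * ∫ s : ℝ, p.2 * g s / ((p.1 - s) ^ 2 + p.2 ^ 2))
      (nhdsWithin (x₀, 0) {p : ℝ × ℝ | 0 < p.2}) (nhds (g x₀)) := by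
  set l := nhdsWithin ((x₀ : ℝ), (0:ℝ)) {p : ℝ × ℝ | 0 < p.2} with hl
  have hInt : Tendsto (fun p : ℝ × ℝ => ∫ t : ℝ, g (p.1 + p.2 * t) / (1 + t ^ 2)) l
      (nhds (∫ t : ℝ, g x₀ / (1 + t ^ 2))) := by
    refine tendsto_integral_filter_of_dominated_convergence (bound := fun t => M * (1 + t ^ 2)⁻¹)
      ?_ ?_ ?_ ?_
    · refine Eventually.of_forall fun p => Continuous.aestronglyMeasurable ?_
      exact (hg.comp (continuous_const.add (continuous_const.mul continuous_id))).div
        (continuous_const.add (continuous_id.pow 2)) fun t => by positivity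
    · refine Eventually.of_forall fun p => Eventually.of_forall fun t => ?_
      have h3 : (0:ℝ) < 1 + t ^ 2 := by positivity
      rw [Real.norm_eq_abs, abs_div, abs_of_pos h3, div_eq_mul_inv]
      exact mul_le_mul_of_nonneg_right (hM _) (by positivity)
    · exact integrable_inv_one_add_sq.const_mul M
    · refine Eventually.of_forall fun t => ?_
      have hc : ContinuousAt (fun p : ℝ × ℝ => g (p.1 + p.2 * t) / (1 + t ^ 2)) (x₀, 0) := by
        apply ContinuousAt.div
        · exact (hg.comp (continuous_fst.add (continuous_snd.mul continuous_const))).continuousAt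
        · exact continuousAt_const
        · positivity
      have h : Tendsto (fun p : ℝ × ℝ => g (p.1 + p.2 * t) / (1 + t ^ 2)) l
          (nhds (g (x₀ + 0 * t) / (1 + t ^ 2))) := by
        rw [hl]
        exact hc.tendsto.mono_left nhdsWithin_le_nhds
      simpa using h
  have hval : (∫ t : ℝ, g x₀ / (1 + t ^ 2)) = g x₀ * Real.pi := by
    simp_rw [div_eq_mul_inv]
    rw [integral_const_mul, integral_univ_inv_one_add_sq]
  have heq : ∀ᶠ p : ℝ × ℝ in l, (1 / Real.pi) * (∫ t : ℝ, g (p.1 + p.2 * t) / (1 + t ^ 2))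
      = (1 / Real.pi) * ∫ s : ℝ, p.2 * g s / ((p.1 - s) ^ 2 + p.2 ^ 2) := by
    filter_upwards [self_mem_nhdsWithin] with p hp
    rw [pk_cov g p.1 p.2 hp]
  have hlim : Tendsto (fun p : ℝ × ℝ =>
      (1 / Real.pi) * ∫ t : ℝ, g (p.1 + p.2 * t) / (1 + t ^ 2)) l
      (nhds ((1 / Real.pi) * (g x₀ * Real.pi))) := by
    rw [← hval]
    exact hInt.const_mul _
  have hfin : (1 / Real.pi) * (g x₀ * Real.pi) = g x₀ := by
    field_simp
  rw [← hfin]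
  exact hlim.congr' heq

/-- The Poisson kernel representation: for bounded continuous g, the Poisson
integral is harmonic on the upper half-plane and attains the boundary values g. -/
theorem poisson_kernel_representation
    (g : ℝ → ℝ) (hg : Continuous g) (M : ℝ) (hM : ∀ t : ℝ, |g t| ≤ M) :
    (∀ x y : ℝ, 0 < y →
      iteratedDeriv 2 (fun t : ℝ =>
        (1 / Real.pi) * ∫ s : ℝ, y * g s / ((t - s) ^ 2 + y ^ 2)) x
      + iteratedDeriv 2 (fun t : ℝ =>
        (1 / Real.pi) * ∫ s : ℝ, t * g s / ((x - s) ^ 2 + t ^ 2)) y = 0) ∧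
    (∀ x₀ : ℝ, Tendsto (fun p : ℝ × ℝ =>
        (1 / Real.pi) * ∫ s : ℝ, p.2 * g s / ((p.1 - s) ^ 2 + p.2 ^ 2))
      (nhdsWithin (x₀, 0) {p : ℝ × ℝ | 0 < p.2}) (nhds (g x₀))) := by
  constructor
  · intro x y hy
    have ex1 : deriv (fun t : ℝ => (1 / Real.pi) * ∫ s : ℝ, y * g s / ((t - s) ^ 2 + y ^ 2))
        = fun t : ℝ => (1 / Real.pi) * ∫ s : ℝ,
            -2 * y * g s * (t - s) / ((t - s) ^ 2 + y ^ 2) ^ 2 :=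
      funext fun t => ((pk_deriv1_x g hg M hM y hy t).2.const_mul (1 / Real.pi)).deriv
    have hx2 : iteratedDeriv 2 (fun t : ℝ =>
        (1 / Real.pi) * ∫ s : ℝ, y * g s / ((t - s) ^ 2 + y ^ 2)) x
        = (1 / Real.pi) * ∫ s : ℝ,
            2 * y * g s * (3 * (x - s) ^ 2 - y ^ 2) / ((x - s) ^ 2 + y ^ 2) ^ 3 := by
      rw [iteratedDeriv_succ, iteratedDeriv_one, ex1]
      exact ((pk_deriv2_x g hg M hM y hy x).2.const_mul (1 / Real.pi)).deriv
    have ey1 : deriv (fun t : ℝ => (1 / Real.pi) * ∫ s : ℝ, t * g s / ((x - s) ^ 2 + t ^ 2))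
        =ᶠ[nhds y] fun t : ℝ => (1 / Real.pi) * ∫ s : ℝ,
            g s * ((x - s) ^ 2 - t ^ 2) / ((x - s) ^ 2 + t ^ 2) ^ 2 := by
      filter_upwards [eventually_gt_nhds hy] with t ht
      exact ((pk_deriv1_y g hg M hM x t ht).2.const_mul (1 / Real.pi)).deriv
    have hy2 : iteratedDeriv 2 (fun t : ℝ =>
        (1 / Real.pi) * ∫ s : ℝ, t * g s / ((x - s) ^ 2 + t ^ 2)) y
        = (1 / Real.pi) * ∫ s : ℝ,
            2 * y * g s * (y ^ 2 - 3 * (x - s) ^ 2) / ((x - s) ^ 2 + y ^ 2) ^ 3 := by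
      rw [iteratedDeriv_succ, iteratedDeriv_one, ey1.deriv_eq]
      exact ((pk_deriv2_y g hg M hM x y hy).2.const_mul (1 / Real.pi)).deriv
    rw [hx2, hy2, ← mul_add,
      ← integral_add (pk_deriv2_x g hg M hM y hy x).1 (pk_deriv2_y g hg M hM x y hy).1]
    have hz : (fun s : ℝ =>
        2 * y * g s * (3 * (x - s) ^ 2 - y ^ 2) / ((x - s) ^ 2 + y ^ 2) ^ 3
        + 2 * y * g s * (y ^ 2 - 3 * (x - s) ^ 2) / ((x - s) ^ 2 + y ^ 2) ^ 3)
        = fun _ : ℝ => (0:ℝ) := by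
      funext s
      rw [← add_div,
        show 2 * y * g s * (3 * (x - s) ^ 2 - y ^ 2)
          + 2 * y * g s * (y ^ 2 - 3 * (x - s) ^ 2) = 0 by ring, zero_div]
    rw [hz, integral_zero, mul_zero]
  · exact pk_boundary g hg M hM
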